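/- Let E(·|·,·) denote (n×n)-determinant ratios in Q_n(P), and let I = {k₁<…<k_n} index points a_{k₁},…,a_{k_n} of P, with i, i' ∈ I and j, j' ∉ I. Then under the (0,1)-swapping bracket, {E(â_i| a_j, a_i), E(â_{i'}| a_{j'}, a_{i'})}_{0,1} = J(a_i a_j, a_{i'} a_{j'}) · E(â_i| a_j, a_i) · E(â_{i'}| a_{j'}, a_{i'}), where â_i denotes the list a_{k₁},…,a_{k_n} with a_i removed. -/
import Mathlib


set_option synthInstance.maxHeartbeats 1000000
set_option maxHeartbeats 4000000

/-- The sign function, valued in ℚ. -/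
noncomputable def sgnq (a : ℝ) : ℚ := if a < 0 then -1 else if a = 0 then 0 else 1

/-- The linking number J(rx, sy), valued in ℚ. -/
noncomputable def Jlink (r x s y : ℝ) : ℚ :=
  (1/2) * sgnq (r-x) * sgnq (r-y) * sgnq (y-x) - (1/2) * sgnq (r-x) * sgnq (r-s) * sgnq (s-x)

/-- The swapping ring Z(P) = K[xy : x,y ∈ P]/(xx = 0): the polynomial ring over K in
variables indexed by ordered pairs of distinct points of P. -/
abbrev SwapRing (K : Type) [Field K] (ι : Type) : Type :=
  MvPolynomial {p : ι × ι // p.1 ≠ p.2} K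

open scoped Classical in
/-- The generator xy ∈ Z(P) (zero when x = y). -/
noncomputable def gen {K : Type} [Field K] {ι : Type} (x y : ι) : SwapRing K ι :=
  if h : x = y then 0 else MvPolynomial.X ⟨(x, y), h⟩

/-- The ideal R_n(P) of Z(P) generated by all (n+1)×(n+1) determinants det(xᵢyⱼ). -/
noncomputable def rankIdeal (K : Type) [Field K] (ι : Type) (n : ℕ) : Ideal (SwapRing K ι) :=
  Ideal.span {D | ∃ x y : Fin (n+1) → ι,
    D = Matrix.det (Matrix.of fun i j => gen (x i) (y j))}

/-- The rank n swapping ring Z_n(P) = Z(P)/R_n(P). -/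
abbrev RankRing (K : Type) [Field K] (ι : Type) (n : ℕ) : Type :=
  SwapRing K ι ⧸ rankIdeal K ι n

/-- The fraction field Q_n(P) of the rank n swapping ring. -/
abbrev RankField (K : Type) [Field K] (ι : Type) (n : ℕ) : Type :=
  FractionRing (RankRing K ι n)

/-- The image of the generator xy in Q_n(P). -/
noncomputable def genR (K : Type) [Field K] (ι : Type) (n : ℕ) (x y : ι) :
    RankField K ι n :=
  algebraMap (RankRing K ι n) (RankField K ι n) (Ideal.Quotient.mk _ (gen x y))

/-- The image of a scalar k ∈ K in Q_n(P). -/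
noncomputable def cstR (K : Type) [Field K] (ι : Type) (n : ℕ) (k : K) :
    RankField K ι n :=
  algebraMap (RankRing K ι n) (RankField K ι n) (algebraMap K (RankRing K ι n) k)

/-- The image of a rational constant in Q_n(P). -/
noncomputable def ratR (K : Type) [Field K] [CharZero K] (ι : Type) (n : ℕ) (q : ℚ) :
    RankField K ι n :=
  cstR K ι n (q • (1 : K))

/-- The (n×n)-determinant ratio
E = Δ((num₁,…,num_n),(v₁,…,v_n)) / Δ((den₁,…,den_n),(v₁,…,v_n)) ∈ Q_n(P). -/
noncomputable def Eratio (K : Type) [Field K] (ι : Type) (n : ℕ)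
    [IsDomain (RankRing K ι n)] (num den v : Fin n → ι) : RankField K ι n :=
  Matrix.det (Matrix.of fun s u => genR K ι n (num s) (v u))
    / Matrix.det (Matrix.of fun s u => genR K ι n (den s) (v u))

/- ==================== auxiliary machinery ==================== -/

/-- decomposition kernel for the linking number -/
noncomputable def gq (a b : ℝ) : ℚ := -(1/2) * sgnq (a - b)

lemma sgnq_lt {a b : ℝ} (h : a < b) : sgnq (a - b) = -1 := by
  unfold sgnq; rw [if_pos (by linarith)]
lemma sgnq_gt {a b : ℝ} (h : b < a) : sgnq (a - b) = 1 := by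
  unfold sgnq; rw [if_neg (by linarith), if_neg (by intro hh; linarith)]
lemma sgnq_eq {a b : ℝ} (h : a = b) : sgnq (a - b) = 0 := by
  unfold sgnq; rw [if_neg (by simp [h]), if_pos (by simp [h])]
lemma sgnq_zero : sgnq 0 = 0 := by unfold sgnq; norm_num

lemma Kdec (r x s : ℝ) : -(1/2) * sgnq (r-x) * sgnq (r-s) * sgnq (s-x)
    = gq r s - gq x s + (1/2) * sgnq (r - x) := by
  unfold gq
  rcases lt_trichotomy r x with h1|h1|h1 <;>
  rcases lt_trichotomy r s with h2|h2|h2 <;>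
  rcases lt_trichotomy x s with h3|h3|h3 <;>
  norm_num [sgnq_lt, sgnq_gt, sgnq_eq, sgnq_zero, h1, h2, h3] <;> linarith

/-- The linking number decomposes as an alternating sum of `gq`. -/
lemma Jdecomp (r x s y : ℝ) : Jlink r x s y = gq r s - gq r y - gq x s + gq x y := by
  have h1 := Kdec r x s
  have h2 := Kdec r x y
  unfold Jlink
  linear_combination h1 - h2

section Bracket
variable {A : Type*} [Field A]

private def Blhom (B : A → A → A) (hal : ∀ x y z, B (x + y) z = B x z + B y z)
    (z : A) : A →+ A := AddMonoidHom.mk' (fun x => B x z) (fun a b => hal a b z)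
private def Brhom (B : A → A → A) (har : ∀ x y z, B x (y + z) = B x y + B x z)
    (z : A) : A →+ A := AddMonoidHom.mk' (fun x => B z x) (fun a b => har z a b)

lemma B_one_left (B : A → A → A) (hll : ∀ x y z, B (x * y) z = x * B y z + B x z * y)
    (z : A) : B 1 z = 0 := by
  have h := hll 1 1 z; simp only [mul_one, one_mul] at h; linear_combination -h
lemma B_one_right (B : A → A → A) (hlr : ∀ x y z, B x (y * z) = y * B x z + B x y * z)
    (z : A) : B z 1 = 0 := by
  have h := hlr z 1 1; simp only [mul_one, one_mul] at h; linear_combination -h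

lemma B_prod_left (B : A → A → A) (hll : ∀ x y z, B (x * y) z = x * B y z + B x z * y)
    {ι : Type*} (S : Finset ι) (f : ι → A) (y : A) (c : ι → A)
    (h : ∀ s ∈ S, B (f s) y = c s * (f s * y)) :
    B (∏ s ∈ S, f s) y = (∑ s ∈ S, c s) * ((∏ s ∈ S, f s) * y) := by
  classical
  induction S using Finset.cons_induction with
  | empty => simp [B_one_left B hll]
  | cons a S ha ih =>
    rw [Finset.prod_cons, Finset.sum_cons, hll,
      ih (fun s hs => h s (Finset.mem_cons_of_mem hs)), h a (Finset.mem_cons_self a S)]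
    ring

lemma B_prod_right (B : A → A → A) (hlr : ∀ x y z, B x (y * z) = y * B x z + B x y * z)
    {ι : Type*} (S : Finset ι) (f : ι → A) (y : A) (c : ι → A)
    (h : ∀ s ∈ S, B y (f s) = c s * (y * f s)) :
    B y (∏ s ∈ S, f s) = (∑ s ∈ S, c s) * (y * (∏ s ∈ S, f s)) := by
  classical
  induction S using Finset.cons_induction with
  | empty => simp [B_one_right B hlr]
  | cons a S ha ih =>
    rw [Finset.prod_cons, Finset.sum_cons, hlr,
      ih (fun s hs => h s (Finset.mem_cons_of_mem hs)), h a (Finset.mem_cons_self a S)]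
    ring

lemma B_det_left (B : A → A → A) (hal : ∀ x y z, B (x + y) z = B x z + B y z)
    (hll : ∀ x y z, B (x * y) z = x * B y z + B x z * y)
    {m : ℕ} (M : Matrix (Fin m) (Fin m) A) (y : A) (α β : Fin m → A)
    (h : ∀ s u, B (M s u) y = (α s + β u) * (M s u * y)) :
    B M.det y = ((∑ s, α s) + (∑ u, β u)) * (M.det * y) := by
  classical
  have hmap : ∀ (x : A), B x y = (Blhom B hal y) x := fun _ => rfl
  rw [Matrix.det_apply, hmap, map_sum]
  have key : ∀ σ : Equiv.Perm (Fin m),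
      (Blhom B hal y) (Equiv.Perm.sign σ • ∏ i, M (σ i) i)
        = ((∑ s, α s) + (∑ u, β u)) * ((Equiv.Perm.sign σ • ∏ i, M (σ i) i) * y) := by
    intro σ
    rw [Units.smul_def, map_zsmul]
    have hp : B (∏ i, M (σ i) i) y
        = (∑ i, (α (σ i) + β i)) * ((∏ i, M (σ i) i) * y) :=
      B_prod_left B hll Finset.univ (fun i => M (σ i) i) y (fun i => α (σ i) + β i)
        (fun i _ => h (σ i) i)
    have hsum : (∑ i, (α (σ i) + β i)) = (∑ s, α s) + (∑ u, β u) := by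
      rw [Finset.sum_add_distrib, Equiv.sum_comp σ α]
    rw [← hmap, hp, hsum]
    simp only [Units.smul_def, smul_mul_assoc, mul_smul_comm]
  rw [Finset.sum_congr rfl (fun σ _ => key σ), ← Finset.mul_sum, ← Finset.sum_mul]

lemma B_det_right (B : A → A → A) (har : ∀ x y z, B x (y + z) = B x y + B x z)
    (hlr : ∀ x y z, B x (y * z) = y * B x z + B x y * z)
    {m : ℕ} (M : Matrix (Fin m) (Fin m) A) (y : A) (α β : Fin m → A)
    (h : ∀ s u, B y (M s u) = (α s + β u) * (y * M s u)) :
    B y M.det = ((∑ s, α s) + (∑ u, β u)) * (y * M.det) := by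
  classical
  have hmap : ∀ (x : A), B y x = (Brhom B har y) x := fun _ => rfl
  rw [Matrix.det_apply, hmap, map_sum]
  have key : ∀ σ : Equiv.Perm (Fin m),
      (Brhom B har y) (Equiv.Perm.sign σ • ∏ i, M (σ i) i)
        = ((∑ s, α s) + (∑ u, β u)) * (y * (Equiv.Perm.sign σ • ∏ i, M (σ i) i)) := by
    intro σ
    rw [Units.smul_def, map_zsmul]
    have hp : B y (∏ i, M (σ i) i)
        = (∑ i, (α (σ i) + β i)) * (y * (∏ i, M (σ i) i)) :=
      B_prod_right B hlr Finset.univ (fun i => M (σ i) i) y (fun i => α (σ i) + β i)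
        (fun i _ => h (σ i) i)
    have hsum : (∑ i, (α (σ i) + β i)) = (∑ s, α s) + (∑ u, β u) := by
      rw [Finset.sum_add_distrib, Equiv.sum_comp σ α]
    rw [← hmap, hp, hsum]
    simp only [Units.smul_def, smul_mul_assoc, mul_smul_comm]
  rw [Finset.sum_congr rfl (fun σ _ => key σ), ← Finset.mul_sum, ← Finset.mul_sum]

end Bracket

/-- `ratR` as a ring hom. -/
noncomputable def ratHom (K : Type) [Field K] [CharZero K] (ι : Type) (n : ℕ) :
    ℚ →+* RankField K ι n :=
  ((algebraMap (RankRing K ι n) (RankField K ι n)).comp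
    ((algebraMap K (RankRing K ι n)).comp (Rat.castHom K)))

lemma ratR_eq (K : Type) [Field K] [CharZero K] (ι : Type) (n : ℕ) (q : ℚ) :
    ratR K ι n q = ratHom K ι n q := by
  unfold ratR cstR ratHom
  rw [Rat.smul_one_eq_cast]
  rfl

/-- row-determinant against columns `v`. -/
noncomputable def MdQ (K : Type) [Field K] (r n : ℕ) (v : Fin n → Fin r)
    (p : Fin n → Fin r) : RankField K (Fin r) n :=
  Matrix.det (Matrix.of fun s u => genR K (Fin r) n (p s) (v u))

/-- the one-row pairing coefficient. -/
noncomputable def ApQ (r n : ℕ) (a : Fin r → ℝ) (v : Fin n → Fin r)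
    (p : Fin n → Fin r) (z : Fin r) : ℚ :=
  ∑ s, (gq (a (p s)) (a z) - gq (a (v s)) (a z))

/-- the det-det pairing coefficient. -/
noncomputable def CtQ (r n : ℕ) (a : Fin r → ℝ) (v p q : Fin n → Fin r) : ℚ :=
  (∑ t, ApQ r n a v p (q t)) - (∑ t, ApQ r n a v p (v t))

/-- Under the (0,1)-swapping bracket on Q_n(P), for i, i' ∈ I and j, j' ∉ I,
{E(âᵢ|aⱼ,aᵢ), E(â_{i'}|a_{j'},a_{i'})}₀,₁
  = J(aᵢaⱼ, a_{i'}a_{j'}) · E(âᵢ|aⱼ,aᵢ) · E(â_{i'}|a_{j'},a_{i'}). -/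
theorem swapping_bracket01_det_ratios (K : Type) [Field K] [CharZero K]
    (n r : ℕ) (hn : 2 ≤ n) (a : Fin r → ℝ) (ha : StrictMono a)
    [IsDomain (RankRing K (Fin r) n)]
    (B : RankField K (Fin r) n → RankField K (Fin r) n → RankField K (Fin r) n)
    (hal : ∀ x y z, B (x + y) z = B x z + B y z)
    (har : ∀ x y z, B x (y + z) = B x y + B x z)
    (hll : ∀ x y z, B (x * y) z = x * B y z + B x z * y)
    (hlr : ∀ x y z, B x (y * z) = y * B x z + B x y * z)
    (hgen : ∀ p q u w : Fin r, B (genR K (Fin r) n p q) (genR K (Fin r) n u w)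
        = ratR K (Fin r) n (Jlink (a p) (a q) (a u) (a w))
            * (genR K (Fin r) n p q * genR K (Fin r) n u w))
    (Ifun : Fin n → Fin r) (hIfun : StrictMono Ifun)
    (l l' : Fin n) (j j' : Fin r)
    (hj : j ∉ Set.range Ifun) (hj' : j' ∉ Set.range Ifun)
    (v : Fin n → Fin r) (hv : Function.Injective v)
    (hden : Matrix.det (Matrix.of fun s u => genR K (Fin r) n (Ifun s) (v u)) ≠ 0) :
    B (Eratio K (Fin r) n (Function.update Ifun l j) Ifun v)
        (Eratio K (Fin r) n (Function.update Ifun l' j') Ifun v)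
      = ratR K (Fin r) n (Jlink (a (Ifun l)) (a j) (a (Ifun l')) (a j'))
          * (Eratio K (Fin r) n (Function.update Ifun l j) Ifun v
              * Eratio K (Fin r) n (Function.update Ifun l' j') Ifun v) := by
  classical
  -- step 1: bracket of a row-determinant with a single generator
  have key1 : ∀ (p : Fin n → Fin r) (c d : Fin r),
      B (MdQ K r n v p) (genR K (Fin r) n c d)
        = ratR K (Fin r) n (ApQ r n a v p c - ApQ r n a v p d)
            * (MdQ K r n v p * genR K (Fin r) n c d) := by
    intro p c d
    have hcond : ∀ s u, B ((Matrix.of fun s u => genR K (Fin r) n (p s) (v u)) s u)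
        (genR K (Fin r) n c d)
        = ((fun s => ratR K (Fin r) n (gq (a (p s)) (a c) - gq (a (p s)) (a d))) s
            + (fun u => ratR K (Fin r) n (gq (a (v u)) (a d) - gq (a (v u)) (a c))) u)
          * (((Matrix.of fun s u => genR K (Fin r) n (p s) (v u)) s u)
              * genR K (Fin r) n c d) := by
      intro s u
      simp only [Matrix.of_apply]
      rw [hgen]
      congr 1
      simp only [ratR_eq]
      rw [← map_add]
      congr 1
      rw [Jdecomp]
      ring
    have h := B_det_left B hal hll
      (Matrix.of fun s u => genR K (Fin r) n (p s) (v u)) (genR K (Fin r) n c d)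
      (fun s => ratR K (Fin r) n (gq (a (p s)) (a c) - gq (a (p s)) (a d)))
      (fun u => ratR K (Fin r) n (gq (a (v u)) (a d) - gq (a (v u)) (a c))) hcond
    have hMd : (Matrix.of fun s u => genR K (Fin r) n (p s) (v u)).det = MdQ K r n v p := rfl
    rw [hMd] at h
    rw [h]
    congr 1
    simp only [ratR_eq]
    rw [← map_sum, ← map_sum, ← map_add]
    congr 1
    unfold ApQ
    rw [← Finset.sum_sub_distrib, ← Finset.sum_add_distrib]
    apply Finset.sum_congr rfl
    intro s _
    ring
  -- step 2: bracket of two row-determinants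
  have key2 : ∀ (p q : Fin n → Fin r),
      B (MdQ K r n v p) (MdQ K r n v q)
        = ratR K (Fin r) n (CtQ r n a v p q) * (MdQ K r n v p * MdQ K r n v q) := by
    intro p q
    have hcond : ∀ t w, B (MdQ K r n v p)
        ((Matrix.of fun t w => genR K (Fin r) n (q t) (v w)) t w)
        = ((fun t => ratR K (Fin r) n (ApQ r n a v p (q t))) t
            + (fun w => ratR K (Fin r) n (-(ApQ r n a v p (v w)))) w)
          * (MdQ K r n v p * ((Matrix.of fun t w => genR K (Fin r) n (q t) (v w)) t w)) := by
      intro t w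
      simp only [Matrix.of_apply]
      rw [key1 p (q t) (v w)]
      congr 1
      simp only [ratR_eq]
      rw [← map_add]
      congr 1
      ring
    have h := B_det_right B har hlr
      (Matrix.of fun t w => genR K (Fin r) n (q t) (v w)) (MdQ K r n v p)
      (fun t => ratR K (Fin r) n (ApQ r n a v p (q t)))
      (fun w => ratR K (Fin r) n (-(ApQ r n a v p (v w)))) hcond
    have hMd : (Matrix.of fun t w => genR K (Fin r) n (q t) (v w)).det = MdQ K r n v q := rfl
    rw [hMd] at h
    rw [h]
    congr 1
    simp only [ratR_eq]
    rw [← map_sum, ← map_sum, ← map_add]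
    congr 1
    unfold CtQ
    rw [Finset.sum_neg_distrib]
    ring
  -- abbreviations
  set x : Fin n → Fin r := Function.update Ifun l j with hx
  set x' : Fin n → Fin r := Function.update Ifun l' j' with hx'
  set N : RankField K (Fin r) n := MdQ K r n v x with hN
  set N' : RankField K (Fin r) n := MdQ K r n v x' with hN'
  set D : RankField K (Fin r) n := MdQ K r n v Ifun with hD
  have hDne : D ≠ 0 := hden
  have hgoal : Eratio K (Fin r) n x Ifun v = N / D := rfl
  have hgoal' : Eratio K (Fin r) n x' Ifun v = N' / D := rfl
  set E : RankField K (Fin r) n := N / D with hE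
  set E' : RankField K (Fin r) n := N' / D with hE'
  have hED : E * D = N := div_mul_cancel₀ N hDne
  have hE'D : E' * D = N' := div_mul_cancel₀ N' hDne
  have h1 := key2 x x'
  have h2 := key2 x Ifun
  have h3 := key2 Ifun x'
  have h4 := key2 Ifun Ifun
  -- quotient-rule bookkeeping
  have q1 : B E D * D = B N D - E * B D D := by
    have hq := hll E D D
    rw [hED] at hq
    linear_combination -hq
  have q2 : B D E' * D = B D N' - E' * B D D := by
    have hq := hlr D E' D
    rw [hE'D] at hq
    linear_combination -hq
  have q4 : B E N' * D = B N N' - E * B D N' := by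
    have hq := hll E D N'
    rw [hED] at hq
    linear_combination -hq
  have q3 : B E E' * D = B E N' - E' * B E D := by
    have hq := hlr E E' D
    rw [hE'D] at hq
    linear_combination -hq
  have key : B E E' * (D * D) = B N N' - E * B D N' - E' * B N D + E * E' * B D D := by
    linear_combination D * q3 + q4 - E' * q1
  -- the coefficient identity over ℚ
  have hApd : ∀ z : Fin r, ApQ r n a v x z - ApQ r n a v Ifun z
      = gq (a j) (a z) - gq (a (Ifun l)) (a z) := by
    intro z
    unfold ApQ
    rw [← Finset.sum_sub_distrib]
    rw [Finset.sum_eq_single_of_mem l (Finset.mem_univ l)]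
    · rw [hx, Function.update_self]
      ring
    · intro s _ hs
      rw [hx, Function.update_of_ne hs]
      ring
  have hCd : ∀ q : Fin n → Fin r, CtQ r n a v x q - CtQ r n a v Ifun q
      = (∑ t, (gq (a j) (a (q t)) - gq (a (Ifun l)) (a (q t))))
        - (∑ t, (gq (a j) (a (v t)) - gq (a (Ifun l)) (a (v t)))) := by
    intro q
    unfold CtQ
    have e1 : (∑ t, ApQ r n a v x (q t)) - (∑ t, ApQ r n a v Ifun (q t))
        = ∑ t, (gq (a j) (a (q t)) - gq (a (Ifun l)) (a (q t))) := by
      rw [← Finset.sum_sub_distrib]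
      exact Finset.sum_congr rfl fun t _ => hApd (q t)
    have e2 : (∑ t, ApQ r n a v x (v t)) - (∑ t, ApQ r n a v Ifun (v t))
        = ∑ t, (gq (a j) (a (v t)) - gq (a (Ifun l)) (a (v t))) := by
      rw [← Finset.sum_sub_distrib]
      exact Finset.sum_congr rfl fun t _ => hApd (v t)
    linear_combination e1 - e2
  have h7 : (∑ t, (gq (a j) (a (x' t)) - gq (a (Ifun l)) (a (x' t))))
      - (∑ t, (gq (a j) (a (Ifun t)) - gq (a (Ifun l)) (a (Ifun t))))
      = (gq (a j) (a j') - gq (a (Ifun l)) (a j'))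
        - (gq (a j) (a (Ifun l')) - gq (a (Ifun l)) (a (Ifun l'))) := by
    rw [← Finset.sum_sub_distrib]
    rw [Finset.sum_eq_single_of_mem l' (Finset.mem_univ l')]
    · rw [hx', Function.update_self]
    · intro t _ ht
      rw [hx', Function.update_of_ne ht]
      ring
  have hJ : Jlink (a (Ifun l)) (a j) (a (Ifun l')) (a j')
      = gq (a (Ifun l)) (a (Ifun l')) - gq (a (Ifun l)) (a j')
        - gq (a j) (a (Ifun l')) + gq (a j) (a j') := Jdecomp _ _ _ _
  have hcoef : CtQ r n a v x x' - CtQ r n a v x Ifun - CtQ r n a v Ifun x'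
      + CtQ r n a v Ifun Ifun = Jlink (a (Ifun l)) (a j) (a (Ifun l')) (a j') := by
    have h5 := hCd x'
    have h6 := hCd Ifun
    linarith [h5, h6, h7, hJ]
  -- put it together
  have hr : ratR K (Fin r) n (Jlink (a (Ifun l)) (a j) (a (Ifun l')) (a j'))
      = ratR K (Fin r) n (CtQ r n a v x x') - ratR K (Fin r) n (CtQ r n a v x Ifun)
        - ratR K (Fin r) n (CtQ r n a v Ifun x') + ratR K (Fin r) n (CtQ r n a v Ifun Ifun) := by
    simp only [ratR_eq]
    rw [← map_sub, ← map_sub, ← map_add]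
    congr 1
    linarith [hcoef]
  set r1 := ratR K (Fin r) n (CtQ r n a v x x') with hr1
  set r2 := ratR K (Fin r) n (CtQ r n a v x Ifun) with hr2
  set r3 := ratR K (Fin r) n (CtQ r n a v Ifun x') with hr3
  set r4 := ratR K (Fin r) n (CtQ r n a v Ifun Ifun) with hr4
  have main : B E E' * (D * D)
      = (ratR K (Fin r) n (Jlink (a (Ifun l)) (a j) (a (Ifun l')) (a j')) * (E * E')) * (D * D) := by
    linear_combination key + h1 - E * h3 - E' * h2 + (E * E') * h4
      + ((r2 - r1) * (E' * D)) * hED + (r3 * (E * D) - r1 * N) * hE'D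
      - (E * E' * (D * D)) * hr
  have hD2 : D * D ≠ 0 := mul_ne_zero hDne hDne
  have final := mul_right_cancel₀ hD2 main
  rw [hgoal, hgoal']
  exact final
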